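/- Let K be a skew-field, κ an infinite cardinal, and R the endomorphism ring of a κ-dimensional left K-vector space. Then every ≤κ-generated R-projective right R-module is projective. -/

import Mathlib

universe u

/-- `M` is `R`-projective. -/
def IsRProjective (R : Type u) [Ring R] (M : Type u) [AddCommGroup M] [Module R M] : Prop :=
  ∀ (I : Submodule R R) (f : M →ₗ[R] R ⧸ I), ∃ g : M →ₗ[R] R, I.mkQ.comp g = f

/-- If `K` is a skew-field and `R` the endomorphism ring of a `κ`-dimensional `K`-vector space
(`κ` infinite), then every `≤ κ`-generated `R`-projective module is projective. -/
theorem rProjective_le_kappa_generated_projective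
    (K : Type u) [DivisionRing K] (V : Type u) [AddCommGroup V] [Module K V]
    (κ : Cardinal.{u}) (hκ : Cardinal.aleph0 ≤ κ) (hrank : Module.rank K V = κ)
    (M : Type u) [AddCommGroup M] [Module (Module.End K V) M]
    (hgen : ∃ S : Set M, Cardinal.mk S ≤ κ ∧ Submodule.span (Module.End K V) S = ⊤)
    (hproj : IsRProjective (Module.End K V) M) :
    Module.Projective (Module.End K V) M := by
  classical
  set R := Module.End K V with hR
  obtain ⟨S, hScard, hSspan⟩ := hgen
  -- a basis of `V`
  set ι := Module.Basis.ofVectorSpaceIndex K V with hι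
  set b : Module.Basis ι K V := Module.Basis.ofVectorSpace K V with hb
  have hmkι : Cardinal.mk ι = κ := by rw [b.mk_eq_rank'', hrank]
  -- `ι × ι ≃ ι`
  obtain ⟨e⟩ : Nonempty (ι × ι ≃ ι) := by
    rw [← Cardinal.eq, Cardinal.mk_prod]
    simp only [Cardinal.lift_id]
    rw [hmkι]; exact Cardinal.mul_eq_self hκ
  -- the maps `φ i : V → V` and `ψ i : V → V` with `ψ i ∘ φ j = δ i j`
  set φ : ι → R := fun i => b.constr ℕ (fun j => b (e (i, j))) with hφ
  set ψ : ι → R := fun i =>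
    b.constr ℕ (fun k => if (e.symm k).1 = i then b (e.symm k).2 else 0) with hψ
  have hψφ : ∀ i j, ψ i * φ j = if j = i then 1 else 0 := by
    intro i j
    apply b.ext
    intro l
    rw [Module.End.mul_apply, hφ, b.constr_basis, hψ, b.constr_basis]
    simp only [Equiv.symm_apply_apply]
    split_ifs with h
    · simp
    · simp
  -- the embedding `Φ : (ι →₀ R) → R` onto a free left ideal
  set Φ : (ι →₀ R) →ₗ[R] R := Finsupp.linearCombination R ψ with hΦdef
  have hΦmul : ∀ (x : ι →₀ R) (j : ι), Φ x * φ j = x j := by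
    intro x j
    rw [hΦdef, Finsupp.linearCombination_apply, Finsupp.sum_mul]
    have : ∀ i ∈ x.support, x i • ψ i * φ j = if j = i then x i else 0 := by
      intro i _
      rw [smul_eq_mul, mul_assoc, hψφ]
      split_ifs <;> simp
    rw [Finsupp.sum, Finset.sum_congr rfl this]
    by_cases hj : j ∈ x.support
    · rw [Finset.sum_ite_eq x.support j (fun i => x i), if_pos hj]
    · rw [Finset.sum_ite_eq x.support j (fun i => x i), if_neg hj,
        Finsupp.notMem_support_iff.mp hj]
  have hΦinj : Function.Injective Φ := by
    rw [injective_iff_map_eq_zero]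
    intro x hx
    ext j
    have := hΦmul x j
    rw [hx, zero_mul] at this
    simp [← this]
  -- a surjection `q : (ι →₀ R) → M`
  have : Nonempty (S ↪ ι) := by
    rw [← Cardinal.le_def, hmkι]; exact hScard
  obtain ⟨emb⟩ := this
  set v : ι → M := fun i => if h : ∃ s : S, emb s = i then ((h.choose : S) : M) else 0 with hv
  have hvS : S ⊆ Set.range v := by
    intro s hs
    refine ⟨emb ⟨s, hs⟩, ?_⟩
    have hex : ∃ t : S, emb t = emb ⟨s, hs⟩ := ⟨⟨s, hs⟩, rfl⟩
    rw [hv]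
    simp only [dif_pos hex]
    have := emb.injective hex.choose_spec
    rw [this]
  have hvspan : Submodule.span R (Set.range v) = ⊤ :=
    top_unique (hSspan ▸ Submodule.span_mono hvS)
  set q : (ι →₀ R) →ₗ[R] M := Finsupp.linearCombination R v with hq
  have hqsurj : Function.Surjective q := by
    rw [← LinearMap.range_eq_top, hq, Finsupp.range_linearCombination, hvspan]
  set N : Submodule R (ι →₀ R) := LinearMap.ker q with hN
  set I : Submodule R R := N.map Φ with hI
  have hle : N ≤ I.comap Φ := fun x hx => Submodule.mem_map_of_mem hx
  set e' : ((ι →₀ R) ⧸ N) ≃ₗ[R] M := q.quotKerEquivOfSurjective hqsurj with he'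
  have he'mk : ∀ x : ι →₀ R, e' (Submodule.Quotient.mk x) = q x := by
    intro x
    rw [he', LinearMap.quotKerEquivOfSurjective]
    rfl
  set f : M →ₗ[R] R ⧸ I := (N.mapQ I Φ hle).comp e'.symm.toLinearMap with hf
  obtain ⟨g, hg⟩ := hproj I f
  -- key: every `g m` is in the range of `Φ`, with preimage mapping to `m` under `q`
  have hkey : ∀ m : M, ∃ y : ι →₀ R, Φ y = g m ∧ q y = m := by
    intro m
    obtain ⟨x, hx⟩ := hqsurj m
    have h1 : I.mkQ (g m) = I.mkQ (Φ x) := by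
      have h2 : f m = I.mkQ (Φ x) := by
        have h3 : e'.symm m = Submodule.Quotient.mk x := by
          rw [LinearEquiv.symm_apply_eq, he'mk, hx]
        rw [hf, LinearMap.comp_apply, LinearEquiv.coe_coe, h3, Submodule.mapQ_apply,
          Submodule.mkQ_apply]
      rw [← h2, ← hg]; rfl
    rw [Submodule.mkQ_apply, Submodule.mkQ_apply, Submodule.Quotient.eq] at h1
    obtain ⟨n, hn, hΦn⟩ := h1
    refine ⟨x + n, ?_, ?_⟩
    · rw [map_add, hΦn]; abel
    · rw [map_add, hx, hn, add_zero]
  -- build the splitting `s : M → (ι →₀ R)`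
  have hmem : ∀ m : M, g m ∈ LinearMap.range Φ := fun m =>
    ⟨(hkey m).choose, (hkey m).choose_spec.1⟩
  set eΦ : (ι →₀ R) ≃ₗ[R] LinearMap.range Φ := LinearEquiv.ofInjective Φ hΦinj with heΦ
  set s : M →ₗ[R] (ι →₀ R) :=
    eΦ.symm.toLinearMap.comp (g.codRestrict (LinearMap.range Φ) hmem) with hs
  have hΦs : ∀ m : M, Φ (s m) = g m := by
    intro m
    have : (eΦ (s m) : R) = g m := by
      rw [hs, LinearMap.comp_apply, LinearEquiv.coe_coe, LinearEquiv.apply_symm_apply]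
      rfl
    rw [← this, heΦ]
    rfl
  have hqs : q.comp s = LinearMap.id := by
    ext m
    obtain ⟨y, hy1, hy2⟩ := hkey m
    have : s m = y := hΦinj (by rw [hΦs, hy1])
    rw [LinearMap.comp_apply, this, hy2, LinearMap.id_apply]
  exact Module.Projective.of_split s q hqs
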